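/- Let {Π_ρ}_{ρ∈R} be a family of mutually orthogonal projectors on A summing to at most the identity, and {M_ρ}_{ρ∈R} orthogonal projectors on Y. If ψ ∈ H ⊗ A where H ⊆ Y is a γ-anti-concentrated subspace, then ‖Π ψ‖ ≤ γ‖ψ‖, where Π = Σ_{ρ∈R} M_ρ ⊗ Π_ρ. -/

import Mathlib

open scoped BigOperators
open Matrix

section Aux

set_option linter.unusedSectionVars false

variable {Y : Type*} [NormedAddCommGroup Y] [InnerProductSpace ℂ Y]
variable {ιA : Type*} [Fintype ιA] [DecidableEq ιA]

/-- Apply a matrix (on the index side) to a family of vectors. -/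
noncomputable def opm (A : Matrix ιA ιA ℂ) (f : ιA → Y) : PiLp 2 (fun _ : ιA => Y) :=
  WithLp.toLp 2 (fun a => ∑ a', A a a' • f a')

lemma opm_apply (A : Matrix ιA ιA ℂ) (f : ιA → Y) (a : ιA) :
    opm A f a = ∑ a', A a a' • f a' := rfl

lemma inner_opm_left (A : Matrix ιA ιA ℂ) (f g : PiLp 2 (fun _ : ιA => Y)) :
    (inner ℂ (opm A f) g : ℂ) = inner ℂ (f : PiLp 2 (fun _ : ιA => Y)) (opm Aᴴ g) := by
  simp only [PiLp.inner_apply (𝕜 := ℂ), opm_apply, sum_inner, inner_sum, inner_smul_left,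
    inner_smul_right, Matrix.conjTranspose_apply]
  rw [Finset.sum_comm]
  simp [mul_comm]

lemma opm_opm (A B : Matrix ιA ιA ℂ) (f : ιA → Y) :
    opm A (opm B f) = opm (A * B) f := by
  ext a
  simp only [opm_apply, Matrix.mul_apply, Finset.smul_sum, Finset.sum_smul, smul_smul]
  rw [Finset.sum_comm]

lemma opm_zero (f : ιA → Y) : opm (0 : Matrix ιA ιA ℂ) f = 0 := by
  ext a; simp [opm_apply]

lemma norm_sq_opm_le (A : Matrix ιA ιA ℂ) (hA : Aᴴ = A) (hAi : A * A = A)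
    (f : PiLp 2 (fun _ : ιA => Y)) :
    ‖opm A f‖ ^ 2 ≤ ‖f‖ ^ 2 := by
  have key : ‖opm A f‖ ^ 2
      = RCLike.re (inner ℂ (f : PiLp 2 (fun _ : ιA => Y)) (opm A f) : ℂ) := by
    rw [← inner_self_eq_norm_sq (𝕜 := ℂ) (opm A f)]
    congr 1
    rw [inner_opm_left, hA, opm_opm, hAi]
  have hle : RCLike.re (inner ℂ (f : PiLp 2 (fun _ : ιA => Y)) (opm A f) : ℂ)
      ≤ ‖f‖ * ‖opm A f‖ := by
    calc RCLike.re (inner ℂ (f : PiLp 2 (fun _ : ιA => Y)) (opm A f) : ℂ)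
        ≤ ‖(inner ℂ (f : PiLp 2 (fun _ : ιA => Y)) (opm A f) : ℂ)‖ := RCLike.re_le_norm _
      _ ≤ ‖f‖ * ‖opm A f‖ := norm_inner_le_norm _ _
  nlinarith [key, hle, norm_nonneg (opm A f), norm_nonneg f, sq_nonneg (‖f‖ - ‖opm A f‖)]

end Aux

/-- If `{Π_ρ}` are mutually orthogonal projectors on `A` (coordinatized by `ιA`,
given as matrices) and `{M_ρ}` orthogonal projectors on `Y`, and `ψ ∈ H ⊗ A`
(components `ψ a ∈ H`) with `H ⊆ Y` a `γ`-anti-concentrated subspace, then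
`‖Πψ‖ ≤ γ‖ψ‖` where `Π = Σ_ρ M_ρ ⊗ Π_ρ` (stated with squared norms). -/
theorem stmt_4 {Y : Type*} [NormedAddCommGroup Y] [InnerProductSpace ℂ Y]
    {ιA R : Type*} [Fintype ιA] [Fintype R] [DecidableEq ιA]
    (M : R → (Y →ₗ[ℂ] Y))
    (hMproj : ∀ ρ, (M ρ) ∘ₗ (M ρ) = M ρ) (hMsym : ∀ ρ, (M ρ).IsSymmetric)
    (P : R → Matrix ιA ιA ℂ)
    (hPherm : ∀ ρ, (P ρ).IsHermitian) (hPidem : ∀ ρ, P ρ * P ρ = P ρ)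
    (hPorth : ∀ ρ ρ', ρ ≠ ρ' → P ρ * P ρ' = 0)
    (γ : ℝ) (hγ : 0 ≤ γ)
    (H : Submodule ℂ Y)
    (hH : ∀ φ ∈ H, ∀ ρ, ‖M ρ φ‖ ≤ γ * ‖φ‖)
    (ψ : ιA → Y) (hψ : ∀ a, ψ a ∈ H) :
    ∑ a, ‖∑ ρ, ∑ a', P ρ a a' • M ρ (ψ a')‖ ^ 2 ≤ γ ^ 2 * ∑ a, ‖ψ a‖ ^ 2 := by
  classical
  set v : R → PiLp 2 (fun _ : ιA => Y) := fun ρ => opm (P ρ) (fun a' => M ρ (ψ a')) with hv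
  set w : R → PiLp 2 (fun _ : ιA => Y) := fun ρ => opm (P ρ) ψ with hw
  have hwH : ∀ ρ a, w ρ a ∈ H := by
    intro ρ a
    simp only [hw, opm_apply]
    exact Submodule.sum_mem H fun a' _ => Submodule.smul_mem H _ (hψ a')
  have hvw : ∀ ρ (a : ιA), v ρ a = M ρ (w ρ a) := by
    intro ρ a
    simp [hv, hw, opm_apply, map_sum, LinearMap.map_smul]
  -- LHS is ‖∑ ρ, v ρ‖ ^ 2
  have hLHS : ∑ a, ‖∑ ρ, ∑ a', P ρ a a' • M ρ (ψ a')‖ ^ 2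
      = ‖(∑ ρ, v ρ : PiLp 2 (fun _ : ιA => Y))‖ ^ 2 := by
    rw [PiLp.norm_sq_eq_of_L2]
    refine Finset.sum_congr rfl fun a _ => ?_
    congr 1
    have h1 : (∑ ρ, v ρ) a = ∑ ρ, v ρ a := by rw [WithLp.ofLp_sum, Finset.sum_apply]
    rw [h1]
    rfl
  rw [hLHS]
  -- cross terms vanish
  have horth : ∀ ρ σ, ρ ≠ σ → (inner ℂ (v ρ) (v σ) : ℂ) = 0 := by
    intro ρ σ hρσ
    show (inner ℂ (opm (P ρ) (WithLp.toLp 2 (fun a' => M ρ (ψ a'))).ofLp) (opm (P σ) (fun a' => M σ (ψ a'))) : ℂ) = 0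
    rw [inner_opm_left, (hPherm ρ).eq, opm_opm, hPorth ρ σ hρσ, opm_zero]
    simp
  have hsplit : ‖(∑ ρ, v ρ : PiLp 2 (fun _ : ιA => Y))‖ ^ 2 = ∑ ρ, ‖v ρ‖ ^ 2 := by
    rw [← inner_self_eq_norm_sq (𝕜 := ℂ)]
    rw [inner_sum]
    rw [show (∑ σ, (inner ℂ (∑ ρ, v ρ) (v σ) : ℂ)) = ∑ σ, ∑ ρ, (inner ℂ (v ρ) (v σ) : ℂ) by
      refine Finset.sum_congr rfl fun σ _ => ?_; rw [sum_inner]]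
    have heq : ∀ σ ∈ Finset.univ, (∑ ρ, (inner ℂ (v ρ) (v σ) : ℂ)) = inner ℂ (v σ) (v σ) := by
      intro σ _
      rw [Finset.sum_eq_single σ]
      · intro ρ _ hρ; exact horth ρ σ hρ
      · intro h; exact absurd (Finset.mem_univ σ) h
    rw [Finset.sum_congr rfl heq, map_sum]
    exact Finset.sum_congr rfl fun σ _ => inner_self_eq_norm_sq (𝕜 := ℂ) _
  rw [hsplit]
  -- bound each diagonal term using anti-concentration
  have hdiag : ∀ ρ, ‖v ρ‖ ^ 2 ≤ γ ^ 2 * ‖w ρ‖ ^ 2 := by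
    intro ρ
    rw [PiLp.norm_sq_eq_of_L2, PiLp.norm_sq_eq_of_L2, Finset.mul_sum]
    refine Finset.sum_le_sum fun a _ => ?_
    rw [hvw ρ a]
    have h1 : ‖M ρ (w ρ a)‖ ≤ γ * ‖w ρ a‖ := hH _ (hwH ρ a) ρ
    calc ‖M ρ (w ρ a)‖ ^ 2 ≤ (γ * ‖w ρ a‖) ^ 2 := by
          exact pow_le_pow_left₀ (norm_nonneg _) h1 2
      _ = γ ^ 2 * ‖w ρ a‖ ^ 2 := by ring
  -- sum of ‖w ρ‖² is at most ‖ψ‖²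
  have hsum : ∑ ρ, ‖w ρ‖ ^ 2 ≤ ∑ a, ‖ψ a‖ ^ 2 := by
    set Q : Matrix ιA ιA ℂ := ∑ ρ, P ρ with hQ
    have hQherm : Qᴴ = Q := by
      simp only [hQ, Matrix.conjTranspose_sum]
      exact Finset.sum_congr rfl fun ρ _ => (hPherm ρ).eq
    have hQidem : Q * Q = Q := by
      simp only [hQ, Finset.sum_mul, Finset.mul_sum]
      refine Finset.sum_congr rfl fun ρ _ => ?_
      rw [Finset.sum_eq_single ρ]
      · exact hPidem ρ
      · intro σ _ hσ; exact hPorth σ ρ hσ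
      · intro h; exact absurd (Finset.mem_univ ρ) h
    let Ψ : PiLp 2 (fun _ : ιA => Y) := WithLp.toLp 2 ψ
    have hterm : ∀ ρ, ‖w ρ‖ ^ 2
        = RCLike.re (inner ℂ Ψ (opm (P ρ) Ψ) : ℂ) := by
      intro ρ
      rw [← inner_self_eq_norm_sq (𝕜 := ℂ)]
      congr 1
      show (inner ℂ (opm (P ρ) Ψ) (opm (P ρ) Ψ) : ℂ) = _
      rw [inner_opm_left, (hPherm ρ).eq, opm_opm, hPidem ρ]
    have hQsum : ∑ ρ, ‖w ρ‖ ^ 2 = ‖opm Q Ψ‖ ^ 2 := by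
      rw [Finset.sum_congr rfl fun ρ _ => hterm ρ, ← map_sum, ← inner_sum]
      have hsum2 : (∑ ρ, opm (P ρ) Ψ) = opm Q Ψ := by
        ext a
        have h1 : (∑ ρ, opm (P ρ) Ψ) a = ∑ ρ, opm (P ρ) Ψ a :=
          by rw [WithLp.ofLp_sum, Finset.sum_apply]
        rw [h1]
        simp only [opm_apply, hQ, Matrix.sum_apply, Finset.sum_smul]
        rw [Finset.sum_comm]
      rw [hsum2, ← inner_self_eq_norm_sq (𝕜 := ℂ)]
      congr 1
      conv_lhs => rw [← hQidem]
      rw [← opm_opm, inner_opm_left, hQherm]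
    calc ∑ ρ, ‖w ρ‖ ^ 2 = ‖opm Q Ψ‖ ^ 2 := hQsum
      _ ≤ ‖Ψ‖ ^ 2 := norm_sq_opm_le Q hQherm hQidem Ψ
      _ = ∑ a, ‖ψ a‖ ^ 2 := PiLp.norm_sq_eq_of_L2 _ Ψ
  calc ∑ ρ, ‖v ρ‖ ^ 2 ≤ ∑ ρ, γ ^ 2 * ‖w ρ‖ ^ 2 := Finset.sum_le_sum fun ρ _ => hdiag ρ
    _ = γ ^ 2 * ∑ ρ, ‖w ρ‖ ^ 2 := by rw [Finset.mul_sum]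
    _ ≤ γ ^ 2 * ∑ a, ‖ψ a‖ ^ 2 := mul_le_mul_of_nonneg_left hsum (by positivity)
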